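/- Let Γ be a finitely generated dense subgroup of the d-dimensional torus 𝕋^d. Then Γ contains d elements that generate a dense subgroup of 𝕋^d. -/

import Mathlib

set_option maxHeartbeats 1000000
set_option synthInstance.maxHeartbeats 400000

noncomputable section

local notation "C𝕋" => AddCircle (1 : ℝ)

instance : Fact ((0:ℝ) < 1) := ⟨one_pos⟩

namespace Stmt3Aux

open Submodule Set AddCircle MeasureTheory TopologicalSpace



open Submodule Set AddCircle MeasureTheory TopologicalSpace

variable {d : ℕ}

def pairHom (χ : Fin d → ℤ) : (Fin d → C𝕋) →+ C𝕋 where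
  toFun y := ∑ l, χ l • y l
  map_zero' := by simp
  map_add' a b := by simp [smul_add, Finset.sum_add_distrib]

lemma pairHom_apply (χ : Fin d → ℤ) (y : Fin d → C𝕋) :
    pairHom χ y = ∑ l, χ l • y l := rfl

lemma pairHom_continuous (χ : Fin d → ℤ) : Continuous (pairHom χ) := by
  show Continuous fun y : Fin d → C𝕋 => ∑ l, χ l • y l
  exact continuous_finset_sum _ fun l _ => (continuous_apply l).zsmul (χ l)

lemma pairHom_add_char (χ χ' : Fin d → ℤ) (y : Fin d → C𝕋) :
    pairHom (χ + χ') y = pairHom χ y + pairHom χ' y := by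
  simp only [pairHom_apply, Pi.add_apply, add_zsmul, Finset.sum_add_distrib]

lemma pairHom_zero_char (y : Fin d → C𝕋) : pairHom (0 : Fin d → ℤ) y = 0 := by
  simp [pairHom_apply]

lemma pairHom_neg_char (χ : Fin d → ℤ) (y : Fin d → C𝕋) :
    pairHom (-χ) y = - pairHom χ y := by
  simp [pairHom_apply, neg_zsmul, Finset.sum_neg_distrib]

lemma pairHom_single_char (l₀ : Fin d) (y : Fin d → C𝕋) :
    pairHom (Pi.single l₀ (1:ℤ)) y = y l₀ := by
  rw [pairHom_apply, Finset.sum_eq_single l₀]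
  · simp
  · intro b _ hb
    rw [Pi.single_apply, if_neg hb, zero_zsmul]
  · simp

lemma toCircle_neg_conj (a : C𝕋) :
    (toCircle (-a) : ℂ) = (starRingEnd ℂ) (toCircle a : ℂ) := by
  have := @fourier_neg' (1:ℝ) 1 a
  rw [one_zsmul] at this
  rw [this, fourier_one]

/-- the character of the torus attached to an integer vector, as a continuous map to ℂ -/
def charCM (χ : Fin d → ℤ) : C((Fin d → C𝕋), ℂ) :=
  ⟨fun y => (toCircle (pairHom χ y) : ℂ),
    continuous_subtype_val.comp (continuous_toCircle.comp (pairHom_continuous χ))⟩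

lemma charCM_apply (χ : Fin d → ℤ) (y : Fin d → C𝕋) :
    charCM χ y = (toCircle (pairHom χ y) : ℂ) := rfl

lemma charCM_mul (χ χ' : Fin d → ℤ) :
    charCM χ * charCM χ' = charCM (χ + χ') := by
  ext y
  simp only [ContinuousMap.mul_apply, charCM_apply, pairHom_add_char, toCircle_add]
  norm_cast

lemma charCM_zero : (charCM (0 : Fin d → ℤ)) = 1 := by
  ext y
  simp [charCM_apply, pairHom_zero_char]

lemma charCM_star (χ : Fin d → ℤ) : star (charCM χ) = charCM (-χ) := by
  ext y
  simp only [ContinuousMap.star_apply, charCM_apply, pairHom_neg_char]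
  rw [toCircle_neg_conj]
  rfl

lemma charCM_point_add (χ : Fin d → ℤ) (a b : Fin d → C𝕋) :
    charCM χ (a + b) = charCM χ a * charCM χ b := by
  simp only [charCM_apply, map_add, toCircle_add]
  norm_cast

lemma charCM_ne_one {χ : Fin d → ℤ} {y : Fin d → C𝕋} (h : pairHom χ y ≠ 0) :
    charCM χ y ≠ 1 := by
  rw [charCM_apply]
  intro hc
  apply h
  have h1 : toCircle (pairHom χ y) = 1 := by
    apply Subtype.coe_injective
    simpa using hc
  have h0 : toCircle (0 : C𝕋) = 1 := toCircle_zero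
  exact injective_toCircle one_ne_zero (by rw [h1, h0])

/-- the star subalgebra generated by the characters -/
def charSubalgebra (d : ℕ) : StarSubalgebra ℂ C((Fin d → C𝕋), ℂ) where
  toSubalgebra := Algebra.adjoin ℂ (range charCM)
  star_mem' := by
    show Algebra.adjoin ℂ (range (charCM (d := d))) ≤
      star (Algebra.adjoin ℂ (range (charCM (d := d))))
    refine Algebra.adjoin_le ?_
    rintro - ⟨n, rfl⟩
    exact Algebra.subset_adjoin ⟨-n, (charCM_star n).symm⟩

theorem charSubalgebra_coe (d : ℕ) :
    Subalgebra.toSubmodule (charSubalgebra d).toSubalgebra = span ℂ (range (charCM (d := d))) := by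
  apply Algebra.adjoin_eq_span_of_subset
  refine Subset.trans ?_ Submodule.subset_span
  intro x hx
  refine Submonoid.closure_induction (motive := fun x _ => x ∈ range (charCM (d := d)))
    (fun _ h => h) ⟨0, charCM_zero⟩ ?_ hx
  rintro x' y' - - ⟨m, rfl⟩ ⟨n, rfl⟩
  exact ⟨m + n, (charCM_mul m n).symm⟩

theorem charSubalgebra_separatesPoints (d : ℕ) : (charSubalgebra d).SeparatesPoints := by
  intro x y hxy
  obtain ⟨l, hl⟩ : ∃ l, x l ≠ y l := by
    by_contra hc
    push_neg at hc
    exact hxy (funext hc)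
  refine ⟨_, ⟨charCM (Pi.single l 1), Algebra.subset_adjoin ⟨Pi.single l 1, rfl⟩, rfl⟩, ?_⟩
  dsimp only
  rw [charCM_apply, charCM_apply, pairHom_single_char, pairHom_single_char]
  intro hc
  exact hl (injective_toCircle one_ne_zero (Subtype.coe_injective hc))

theorem charSubalgebra_closure_eq_top (d : ℕ) :
    (charSubalgebra d).topologicalClosure = ⊤ :=
  ContinuousMap.starSubalgebra_topologicalClosure_eq_top_of_separatesPoints _
    (charSubalgebra_separatesPoints d)


theorem dense_of_chars {d : ℕ} (H : AddSubgroup (Fin d → C𝕋))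
    (h : ∀ χ : Fin d → ℤ, χ ≠ 0 → ∃ y ∈ H, pairHom χ y ≠ 0) :
    Dense (H : Set (Fin d → C𝕋)) := by
  by_contra hnd
  obtain ⟨x₀, hx₀⟩ : ∃ x₀, x₀ ∉ closure (H : Set (Fin d → C𝕋)) := by
    by_contra hc
    push_neg at hc
    exact hnd hc
  set K := H.topologicalClosure with hK
  have hKset : (K : Set (Fin d → C𝕋)) = closure (H : Set (Fin d → C𝕋)) := rfl
  have hKclosed : IsClosed (K : Set (Fin d → C𝕋)) := H.isClosed_topologicalClosure
  have hx₀K : x₀ ∉ (K : Set (Fin d → C𝕋)) := by rw [hKset]; exact hx₀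
  haveI : CompactSpace K := isCompact_iff_compactSpace.mp hKclosed.isCompact
  letI : MeasurableSpace K := borel K
  haveI : BorelSpace K := ⟨rfl⟩
  let K₀ : PositiveCompacts K := ⟨⟨Set.univ, isCompact_univ⟩, by simp [interior_univ]⟩
  let μ : Measure K := Measure.addHaarMeasure K₀
  haveI : IsFiniteMeasure μ := inferInstance
  have hμ1 : μ Set.univ = 1 := by exact Measure.addHaarMeasure_self (K₀ := K₀)
  -- Urysohn
  have hcpt : IsCompact ((fun y => x₀ + y) '' (K : Set (Fin d → C𝕋))) :=
    hKclosed.isCompact.image (continuous_const.add continuous_id)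
  have hdisj : Disjoint ((fun y => x₀ + y) '' (K : Set (Fin d → C𝕋)))
      (K : Set (Fin d → C𝕋)) := by
    rw [Set.disjoint_left]
    rintro z ⟨k, hk, rfl⟩ hz
    apply hx₀K
    have : x₀ = (x₀ + k) - k := by abel
    rw [this]
    exact sub_mem hz hk
  obtain ⟨f, hf0, hf1, hfI⟩ :=
    exists_continuous_zero_one_of_isCompact hcpt hKclosed hdisj
  let fC : C((Fin d → C𝕋), ℂ) :=
    ⟨fun y => ((f y : ℝ) : ℂ), Complex.continuous_ofReal.comp f.continuous⟩
  -- approximation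
  have hdense : Dense ((charSubalgebra d : Set C((Fin d → C𝕋), ℂ))) := by
    have htop := charSubalgebra_closure_eq_top d
    have : closure ((charSubalgebra d : Set C((Fin d → C𝕋), ℂ))) =
        ((charSubalgebra d).topologicalClosure : Set C((Fin d → C𝕋), ℂ)) := rfl
    rw [dense_iff_closure_eq, this, htop]
    rfl
  obtain ⟨T, hTmem, hTnear⟩ : ∃ T ∈ charSubalgebra d, ‖fC - T‖ < 1/3 := by
    have := Metric.mem_closure_iff.mp (hdense.closure_eq ▸ Set.mem_univ fC) (1/3) (by norm_num)
    obtain ⟨b, hb, hdist⟩ := this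
    exact ⟨b, hb, by rwa [← dist_eq_norm]⟩
  have hTspan : T ∈ span ℂ (range (charCM (d := d))) := by
    rw [← charSubalgebra_coe d]
    exact hTmem
  obtain ⟨c, hsupp, hsum⟩ := mem_span_set.mp hTspan
  -- integrals
  let J : (Fin d → C𝕋) → C((Fin d → C𝕋), ℂ) → ℂ := fun x g => ∫ k : K, g (x + ↑k) ∂μ
  have hinteg : ∀ (x : Fin d → C𝕋) (g : C((Fin d → C𝕋), ℂ)),
      Integrable (fun k : K => g (x + ↑k)) μ := by
    intro x g
    have hcont : Continuous (fun k : K => g (x + ↑k)) :=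
      g.continuous.comp (continuous_const.add continuous_subtype_val)
    exact hcont.integrable_of_hasCompactSupport (HasCompactSupport.of_compactSpace _)
  have hINT : ∀ χ : Fin d → ℤ, J x₀ (charCM χ) = J 0 (charCM χ) := by
    intro χ
    by_cases hχ : χ = 0
    · subst hχ
      rw [charCM_zero]
      simp [J]
    · have horto : ∫ k : K, charCM χ (↑k) ∂μ = 0 := by
        obtain ⟨y₀, hy₀H, hy₀⟩ := h χ hχ
        have hy₀K : y₀ ∈ K := H.le_topologicalClosure hy₀H
        have hinv := integral_add_left_eq_self (μ := μ)
          (fun k : K => charCM χ (↑k)) ⟨y₀, hy₀K⟩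
        have hlhs : (∫ k : K, charCM χ (↑((⟨y₀, hy₀K⟩ : K) + k)) ∂μ)
            = charCM χ y₀ * ∫ k : K, charCM χ (↑k) ∂μ := by
          rw [← integral_const_mul]
          congr 1
          funext k
          rw [AddSubgroup.coe_add]
          exact charCM_point_add χ y₀ ↑k
        rw [hlhs] at hinv
        have hfac : (charCM χ y₀ - 1) * (∫ k : K, charCM χ (↑k) ∂μ) = 0 := by
          rw [sub_mul, one_mul, hinv, sub_self]
        rcases mul_eq_zero.mp hfac with h1 | h2
        · exact absurd (sub_eq_zero.mp h1) (charCM_ne_one hy₀)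
        · exact h2
      have e1 : J x₀ (charCM χ) = charCM χ x₀ * ∫ k : K, charCM χ (↑k) ∂μ := by
        show (∫ k : K, charCM χ (x₀ + ↑k) ∂μ) = _
        rw [← integral_const_mul]
        congr 1
        funext k
        exact charCM_point_add χ x₀ ↑k
      have e0 : J 0 (charCM χ) = ∫ k : K, charCM χ (↑k) ∂μ := by
        show (∫ k : K, charCM χ ((0 : Fin d → C𝕋) + ↑k) ∂μ) = _
        congr 1
        funext k
        rw [zero_add]
      rw [e1, e0, horto, mul_zero]
  have hTEQ : J x₀ T = J 0 T := by
    have hrepr : ∀ x : Fin d → C𝕋,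
        J x T = ∑ g ∈ c.support, c g * J x g := by
      intro x
      have : J x T = ∫ k : K, (∑ g ∈ c.support, c g * g (x + ↑k)) ∂μ := by
        show (∫ k : K, T (x + ↑k) ∂μ) = _
        congr 1
        funext k
        rw [← hsum]
        rw [Finsupp.sum]
        rw [ContinuousMap.coe_sum]
        rw [Finset.sum_apply]
        refine Finset.sum_congr rfl fun g hg => ?_
        rw [ContinuousMap.coe_smul]
        simp [smul_eq_mul]
      rw [this, integral_finset_sum]
      · refine Finset.sum_congr rfl fun g hg => ?_
        rw [← integral_const_mul]
      · intro g hg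
        exact (hinteg x g).const_mul (c g)
    rw [hrepr x₀, hrepr 0]
    refine Finset.sum_congr rfl fun g hg => ?_
    have hgr : g ∈ range (charCM (d := d)) := hsupp hg
    obtain ⟨χ, rfl⟩ := hgr
    rw [hINT χ]
  -- values of the two integrals of fC
  have hI0 : J 0 fC = 1 := by
    have : (fun k : K => fC ((0 : Fin d → C𝕋) + ↑k)) = fun _ => (1:ℂ) := by
      funext k
      have hk : ((0 : Fin d → C𝕋) + ↑k) ∈ (K : Set (Fin d → C𝕋)) := by
        rw [zero_add]; exact k.2
      have := hf1 hk
      show ((f ((0 : Fin d → C𝕋) + ↑k) : ℝ) : ℂ) = 1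
      rw [this]
      norm_num
    show (∫ k : K, fC ((0 : Fin d → C𝕋) + ↑k) ∂μ) = 1
    rw [this, integral_const, measureReal_def, hμ1]
    simp
  have hI1 : J x₀ fC = 0 := by
    have : (fun k : K => fC (x₀ + ↑k)) = fun _ => (0:ℂ) := by
      funext k
      have hk : (x₀ + ↑k) ∈ (fun y => x₀ + y) '' (K : Set (Fin d → C𝕋)) :=
        ⟨↑k, k.2, rfl⟩
      have := hf0 hk
      show ((f (x₀ + ↑k) : ℝ) : ℂ) = 0
      rw [this]
      norm_num
    show (∫ k : K, fC (x₀ + ↑k) ∂μ) = 0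
    rw [this]
    simp
  -- error bounds
  have hbound : ∀ x : Fin d → C𝕋, ‖J x fC - J x T‖ ≤ ‖fC - T‖ := by
    intro x
    have hdiff : J x fC - J x T = ∫ k : K, (fC - T) (x + ↑k) ∂μ := by
      show (∫ k : K, fC (x + ↑k) ∂μ) - (∫ k : K, T (x + ↑k) ∂μ) = _
      rw [← integral_sub (hinteg x fC) (hinteg x T)]
      congr 1
    rw [hdiff]
    have := norm_integral_le_of_norm_le_const (μ := μ)
      (C := ‖fC - T‖) (f := fun k : K => (fC - T) (x + ↑k)) ?_
    · calc ‖∫ k : K, (fC - T) (x + ↑k) ∂μ‖ ≤ ‖fC - T‖ * (μ Set.univ).toReal := this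
        _ = ‖fC - T‖ := by rw [hμ1]; simp
    · exact Filter.Eventually.of_forall fun k => ContinuousMap.norm_coe_le_norm (fC - T) _
  have h0 := hbound 0
  have h1 := hbound x₀
  rw [hTEQ] at h1
  have : (1 : ℝ) ≤ 2/3 := by
    have hdiffnorm : ‖J 0 fC - J x₀ fC‖ = 1 := by
      rw [hI0, hI1]
      simp
    have : ‖J 0 fC - J x₀ fC‖ ≤ ‖J 0 fC - J 0 T‖ + ‖J x₀ fC - J 0 T‖ := by
      have : J 0 fC - J x₀ fC = (J 0 fC - J 0 T) - (J x₀ fC - J 0 T) := by ring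
      rw [this]
      exact norm_sub_le _ _
    rw [hdiffnorm] at this
    have hT3 : ‖fC - T‖ < 1/3 := hTnear
    linarith
  linarith



lemma half_ne_zero' : ((1/2 : ℝ) : C𝕋) ≠ 0 := by
  intro h
  rw [AddCircle.coe_eq_zero_iff] at h
  obtain ⟨n, hn⟩ := h
  have hn' : (n : ℝ) = 1/2 := by simpa using hn
  have h2 : ((2 * n : ℤ) : ℝ) = ((1 : ℤ) : ℝ) := by push_cast; linarith
  have := Int.cast_injective (α := ℝ) h2
  omega

lemma pairHom_single (χ : Fin d → ℤ) (l₀ : Fin d) (u : C𝕋) :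
    pairHom χ (Pi.single l₀ u) = χ l₀ • u := by
  show (∑ l, χ l • Pi.single l₀ u l) = χ l₀ • u
  rw [Finset.sum_eq_single l₀]
  · simp
  · intro b _ hb
    simp [Pi.single_apply, if_neg hb]
  · simp

/-- the easy direction: a character vanishing on a dense subgroup is zero -/
lemma char_eq_zero_of_dense {H : AddSubgroup (Fin d → C𝕋)}
    (hH : Dense (H : Set (Fin d → C𝕋))) (χ : Fin d → ℤ)
    (h0 : ∀ y ∈ H, pairHom χ y = 0) : χ = 0 := by
  have hall : ∀ y, pairHom χ y = 0 := by
    intro y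
    have hker : (H : Set (Fin d → C𝕋)) ⊆ (pairHom χ) ⁻¹' {0} := fun z hz => h0 z hz
    have hcl : IsClosed ((pairHom χ) ⁻¹' {0}) :=
      IsClosed.preimage (pairHom_continuous χ) isClosed_singleton
    have := hcl.closure_subset_iff.mpr hker
    have huniv : closure (H : Set (Fin d → C𝕋)) = Set.univ := hH.closure_eq
    rw [huniv] at this
    exact this (Set.mem_univ y)
  ext l₀
  by_contra hl
  have hne : χ l₀ ≠ 0 := hl
  set u : C𝕋 := (((1/(2 * (χ l₀ : ℝ))) : ℝ) : C𝕋) with hu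
  have := hall (Pi.single l₀ u)
  rw [pairHom_single] at this
  have hcoe : χ l₀ • u = ((1/2 : ℝ) : C𝕋) := by
    rw [hu, ← AddCircle.coe_zsmul]
    congr 1
    have hc : (χ l₀ : ℝ) ≠ 0 := Int.cast_ne_zero.mpr hne
    field_simp
    simp [hc]
  rw [hcoe] at this
  exact half_ne_zero' this





lemma sel {d n : ℕ} (hn : 0 < n) (K : Fin n → Submodule ℚ (Fin d → ℚ))
    (h : ⨅ j, K j = ⊥) : ∃ σ : Fin d → Fin n, ⨅ i, K (σ i) = ⊥ := by
  have aux : ∀ m : ℕ, ∃ σ : ℕ → Fin n,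
      Module.finrank ℚ ↥(⨅ i ∈ Finset.range m, K (σ i)) ≤ d - m := by
    intro m
    induction m with
    | zero =>
      refine ⟨fun _ => ⟨0, hn⟩, ?_⟩
      have : (⨅ i ∈ Finset.range 0, K ((fun _ => (⟨0, hn⟩ : Fin n)) i)) = ⊤ := by
        simp
      rw [this, finrank_top, Module.finrank_pi]
      simp
    | succ m ih =>
      obtain ⟨σ, hσ⟩ := ih
      set I := ⨅ i ∈ Finset.range m, K (σ i) with hI
      by_cases hbot : I = ⊥
      · refine ⟨σ, ?_⟩
        have hle : (⨅ i ∈ Finset.range (m+1), K (σ i)) ≤ I := by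
          rw [hI]
          exact le_iInf₂ fun i hi => iInf₂_le i
            (Finset.mem_range.mpr (Nat.lt_succ_of_lt (Finset.mem_range.mp hi)))
        have : (⨅ i ∈ Finset.range (m+1), K (σ i)) = ⊥ := le_bot_iff.mp (hbot ▸ hle)
        rw [this]
        simp
      · obtain ⟨j, hj⟩ : ∃ j, ¬ I ≤ K j := by
          by_contra hc
          push_neg at hc
          exact hbot (le_bot_iff.mp (h ▸ le_iInf hc))
        refine ⟨Function.update σ m j, ?_⟩
        have hcongr : (⨅ i ∈ Finset.range m, K (Function.update σ m j i)) = I := by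
          rw [hI]
          refine iInf_congr fun i => iInf_congr fun hi => ?_
          rw [Function.update_of_ne (Nat.ne_of_lt (Finset.mem_range.mp hi))]
        have hsplit : (⨅ i ∈ Finset.range (m+1), K (Function.update σ m j i))
            = K j ⊓ I := by
          rw [Finset.range_add_one]
          rw [Finset.iInf_insert]
          rw [hcongr, Function.update_self]
        have hlt : K j ⊓ I < I := by
          refine lt_of_le_of_ne inf_le_right ?_
          intro he
          exact hj (by rw [← he] ; exact inf_le_left)
        have hrk : Module.finrank ℚ ↥(K j ⊓ I) < Module.finrank ℚ ↥I :=
          Submodule.finrank_lt_finrank_of_lt hlt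
        rw [hsplit]
        omega
  obtain ⟨σ, hσ⟩ := aux d
  have hb : (⨅ i ∈ Finset.range d, K (σ i)) = ⊥ := by
    have : Module.finrank ℚ ↥(⨅ i ∈ Finset.range d, K (σ i)) = 0 := by omega
    exact Submodule.finrank_eq_zero.mp this
  refine ⟨fun i => σ i.val, ?_⟩
  rw [eq_bot_iff]
  intro x hx
  have : x ∈ (⨅ i ∈ Finset.range d, K (σ i)) := by
    rw [Submodule.mem_iInf]
    intro i
    rw [Submodule.mem_iInf]
    intro hi
    exact (Submodule.mem_iInf _).mp hx ⟨i, Finset.mem_range.mp hi⟩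
  rw [hb] at this
  exact this



-- clearing denominators
lemma ratden {q : ℚ} {m : ℕ} (h : (q.den : ℤ) ∣ (m : ℤ)) :
    ∃ z : ℤ, (m : ℚ) * q = z := by
  obtain ⟨k, hk⟩ := h
  refine ⟨k * q.num, ?_⟩
  have hden : (q.den : ℚ) * q = q.num := by
    rw [mul_comm]
    exact_mod_cast Rat.mul_den_eq_num q
  have : ((m : ℤ) : ℚ) = (q.den : ℚ) * (k : ℚ) := by
    rw [hk]; push_cast; ring
  push_cast at this ⊢
  rw [this, mul_assoc, mul_comm (k:ℚ) q, ← mul_assoc, hden]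
  ring


lemma coe_sum_real {α : Type*} (s : Finset α) (f : α → ℝ) :
    ((∑ i ∈ s, f i : ℝ) : C𝕋) = ∑ i ∈ s, ((f i : ℝ) : C𝕋) := by
  classical
  induction s using Finset.induction_on with
  | empty => simp
  | insert _ _ hnotmem ih =>
    rw [Finset.sum_insert hnotmem, Finset.sum_insert hnotmem, ← ih]
    rfl


/-- The main linear-algebra reduction: from a family of `n` elements of the torus whose
annihilator is trivial, one can select `d` of them with trivial annihilator. -/
lemma bridge {n : ℕ} (g : Fin n → (Fin d → C𝕋))
    (P : ∀ χ : Fin d → ℤ, (∀ j, pairHom χ (g j) = 0) → χ = 0) :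
    ∃ σ : Fin d → Fin n, ∀ χ : Fin d → ℤ, (∀ i, pairHom χ (g (σ i)) = 0) → χ = 0 := by
  rcases Nat.eq_zero_or_pos d with hd | hd
  · subst hd
    exact ⟨Fin.elim0, fun χ _ => Subsingleton.elim _ _⟩
  have hn : 0 < n := by
    rcases Nat.eq_zero_or_pos n with hn0 | hn0
    · exfalso
      subst hn0
      have h1 := P (fun _ => 1) (fun j => j.elim0)
      have h2 : (1 : ℤ) = 0 := congrFun h1 ⟨0, hd⟩
      exact one_ne_zero h2
    · exact hn0
  -- choose real lifts of the torus elements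
  have hsurj : ∀ (j : Fin n) (l : Fin d), ∃ r : ℝ, ((r : ℝ) : C𝕋) = g j l := fun j l =>
    QuotientAddGroup.mk_surjective (g j l)
  choose x hx using hsurj
  -- the finite-dimensional ℚ-subspace of ℝ spanned by 1 and the lifts
  set X : Set ℝ := Set.range (fun p : Fin n × Fin d => x p.1 p.2) with hX
  have hXfin : X.Finite := Set.finite_range _
  set V : Submodule ℚ ℝ := span ℚ (insert (1:ℝ) X) with hV
  haveI : FiniteDimensional ℚ V := FiniteDimensional.span_of_finite ℚ (hXfin.insert 1)
  have h1V : (1:ℝ) ∈ V := subset_span (mem_insert _ _)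
  have hxV : ∀ j l, x j l ∈ V := fun j l => subset_span (mem_insert_of_mem _ ⟨(j,l), rfl⟩)
  set one' : V := ⟨1, h1V⟩ with hone
  have hone0 : one' ≠ 0 := fun hc => one_ne_zero (congrArg Subtype.val hc)
  have hli : LinearIndepOn ℚ id ({one'} : Set V) :=
    LinearIndepOn.singleton hone0
  set b : Module.Basis _ ℚ V := Module.Basis.extend hli with hb
  have hmem1 : one' ∈ hli.extend (Set.subset_univ _) := hli.subset_extend _ rfl
  set i₀ : ↥(hli.extend (Set.subset_univ _)) := ⟨one', hmem1⟩ with hi₀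
  have hbi₀ : b i₀ = one' := Module.Basis.extend_apply_self hli i₀
  -- the coefficient maps
  have memV : ∀ (j : Fin n) (q : Fin d → ℚ), (∑ l, (q l : ℝ) * x j l) ∈ V := by
    intro j q
    refine sum_mem fun l _ => ?_
    have h' : (q l : ℝ) * x j l = q l • x j l := (Rat.smul_def _ _).symm
    rw [h']
    exact smul_mem _ _ (hxV j l)
  set Xq : Fin n → ((Fin d → ℚ) →ₗ[ℚ] V) := fun j =>
    { toFun := fun q => ⟨∑ l, (q l : ℝ) * x j l, memV j q⟩
      map_add' := by
        intro a c
        apply Subtype.ext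
        show (∑ l, (((a + c) l : ℚ) : ℝ) * x j l)
            = (∑ l, ((a l : ℚ) : ℝ) * x j l) + ∑ l, ((c l : ℚ) : ℝ) * x j l
        rw [← Finset.sum_add_distrib]
        refine Finset.sum_congr rfl fun l _ => ?_
        push_cast [Pi.add_apply]
        ring
      map_smul' := by
        intro r a
        apply Subtype.ext
        show (∑ l, (((r • a) l : ℚ) : ℝ) * x j l) = r • (∑ l, ((a l : ℚ) : ℝ) * x j l)
        rw [Rat.smul_def, Finset.mul_sum]
        refine Finset.sum_congr rfl fun l _ => ?_
        show (((r * a l : ℚ) : ℝ)) * x j l = (r : ℝ) * (((a l : ℚ) : ℝ) * x j l)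
        push_cast
        ring } with hXq
  set cq : Fin n → ((Fin d → ℚ) →ₗ[ℚ] (↥(hli.extend (Set.subset_univ _)) →₀ ℚ)) := fun j =>
    (b.repr.toLinearMap) ∘ₗ Xq j with hcq
  -- Claim 1 : vanishing of the pairing in terms of coordinates
  have claim1 : ∀ (χ : Fin d → ℤ) (j : Fin n),
      pairHom χ (g j) = 0 ↔
        ((∀ t, t ≠ i₀ → cq j (fun l => (χ l : ℚ)) t = 0) ∧
         (∃ z : ℤ, cq j (fun l => (χ l : ℚ)) i₀ = z)) := by
    intro χ j
    have hcoe : (↑(Xq j (fun l => (χ l : ℚ))) : ℝ) = ∑ l, (χ l : ℝ) * x j l := by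
      show (∑ l, (((χ l : ℚ)) : ℝ) * x j l) = _
      refine Finset.sum_congr rfl fun l _ => ?_
      norm_cast
    have hpair : pairHom χ (g j) = ((↑(Xq j (fun l => (χ l : ℚ))) : ℝ) : C𝕋) := by
      rw [pairHom_apply, hcoe]
      rw [coe_sum_real]
      refine Finset.sum_congr rfl fun l _ => ?_
      rw [← hx j l, ← AddCircle.coe_zsmul]
      congr 1
      rw [zsmul_eq_mul]
    constructor
    · intro h0
      rw [hpair, AddCircle.coe_eq_zero_iff] at h0
      obtain ⟨z, hz⟩ := h0
      have hz' : (↑(Xq j (fun l => (χ l : ℚ))) : ℝ) = (z : ℝ) := by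
        rw [← hz]; simp
      have hXz : Xq j (fun l => (χ l : ℚ)) = (z : ℚ) • one' := by
        apply Subtype.ext
        rw [hz']
        show (z : ℝ) = (z : ℚ) • (1:ℝ)
        rw [Rat.smul_def]
        push_cast
        ring
      have hrone : b.repr one' = Finsupp.single i₀ 1 := by
        have h' := b.repr_self i₀
        rw [hbi₀] at h'
        exact h'
      have hrepr : cq j (fun l => (χ l : ℚ)) = Finsupp.single i₀ (z : ℚ) := by
        show b.repr (Xq j (fun l => (χ l : ℚ))) = _
        rw [hXz, _root_.map_smul, hrone, Finsupp.smul_single, smul_eq_mul, mul_one]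
      constructor
      · intro t ht
        rw [hrepr, Finsupp.single_apply, if_neg (fun hc => ht hc.symm)]
      · exact ⟨z, by rw [hrepr, Finsupp.single_apply, if_pos rfl]⟩
    · rintro ⟨hvan, z, hz⟩
      have hrepr : b.repr (Xq j (fun l => (χ l : ℚ))) = Finsupp.single i₀ (z : ℚ) := by
        ext t
        by_cases ht : t = i₀
        · subst ht
          rw [Finsupp.single_apply, if_pos rfl]
          exact hz
        · rw [Finsupp.single_apply, if_neg (fun hc => ht hc.symm)]
          exact hvan t ht
      have hrone : b.repr one' = Finsupp.single i₀ 1 := by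
        have h' := b.repr_self i₀
        rw [hbi₀] at h'
        exact h'
      have hXz : Xq j (fun l => (χ l : ℚ)) = (z : ℚ) • one' := by
        apply b.repr.injective
        rw [hrepr, _root_.map_smul, hrone, Finsupp.smul_single, smul_eq_mul, mul_one]
      have hz' : (↑(Xq j (fun l => (χ l : ℚ))) : ℝ) = (z : ℝ) := by
        rw [hXz]
        show ((z : ℚ) • (1:ℝ)) = (z : ℝ)
        rw [Rat.smul_def]
        push_cast
        ring
      rw [hpair, hz', AddCircle.coe_eq_zero_iff]
      exact ⟨z, by simp⟩
  -- Claim 2 : triviality of the "irrational part" annihilator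
  set δQ : Fin d → (Fin d → ℚ) := fun l m => if l = m then 1 else 0 with hδ
  set DN : ℕ := ∏ j : Fin n, ∏ l : Fin d, (cq j (δQ l) i₀).den with hDN
  have hDNdvd : ∀ (j : Fin n) (l : Fin d), ((cq j (δQ l) i₀).den : ℤ) ∣ (DN : ℤ) := by
    intro j l
    have h1 : (cq j (δQ l) i₀).den ∣ DN := by
      refine dvd_trans
        (Finset.dvd_prod_of_mem (fun l => ((cq j) (δQ l) i₀).den) (Finset.mem_univ l)) ?_
      exact Finset.dvd_prod_of_mem (fun j => ∏ l : Fin d, ((cq j) (δQ l) i₀).den)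
        (Finset.mem_univ j)
    exact_mod_cast Int.natCast_dvd_natCast.mpr h1
  have hDNpos : 0 < DN :=
    Finset.prod_pos fun j _ => Finset.prod_pos fun l _ => (cq j (δQ l) i₀).pos
  have claim2 : ∀ χ : Fin d → ℤ,
      (∀ j, ∀ t, t ≠ i₀ → cq j (fun l => (χ l : ℚ)) t = 0) → χ = 0 := by
    intro χ hχv
    have hint : ∀ j, ∃ z : ℤ, (DN:ℚ) * cq j (fun l => (χ l : ℚ)) i₀ = z := by
      intro j
      have hexp : cq j (fun l => (χ l : ℚ)) = ∑ l, (χ l : ℚ) • cq j (δQ l) := by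
        have h' := LinearMap.pi_apply_eq_sum_univ (cq j) (fun l => (χ l : ℚ))
        simpa [hδ] using h'
      have happ : cq j (fun l => (χ l : ℚ)) i₀ = ∑ l, (χ l : ℚ) * cq j (δQ l) i₀ := by
        rw [hexp, Finsupp.finset_sum_apply]
        refine Finset.sum_congr rfl fun l _ => ?_
        rw [Finsupp.smul_apply, smul_eq_mul]
      have hterm : ∀ l, ∃ z : ℤ, (DN:ℚ) * cq j (δQ l) i₀ = z := fun l => ratden (hDNdvd j l)
      choose zz hzz using hterm
      refine ⟨∑ l, χ l * zz l, ?_⟩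
      rw [happ, Finset.mul_sum]
      push_cast
      refine Finset.sum_congr rfl fun l _ => ?_
      rw [← hzz l]
      ring
    set χ' : Fin d → ℤ := fun l => (DN:ℤ) * χ l with hχ'
    have hq' : (fun l => ((χ' l : ℚ))) = (DN:ℚ) • (fun l => ((χ l : ℚ))) := by
      funext l
      rw [hχ']
      show (((DN:ℤ) * χ l : ℤ) : ℚ) = ((DN:ℚ) • fun l => ((χ l : ℚ))) l
      rw [Pi.smul_apply, smul_eq_mul]
      push_cast
      ring
    have hpair' : ∀ j, pairHom χ' (g j) = 0 := by
      intro j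
      rw [claim1 χ' j]
      constructor
      · intro t ht
        rw [hq', _root_.map_smul, Finsupp.smul_apply, hχv j t ht, smul_zero]
      · obtain ⟨z, hz⟩ := hint j
        refine ⟨z, ?_⟩
        rw [hq', _root_.map_smul, Finsupp.smul_apply, smul_eq_mul, hz]
    have hzero := P χ' hpair'
    funext l
    have hl : (DN:ℤ) * χ l = 0 := congrFun hzero l
    have hDN0 : (DN:ℤ) ≠ 0 := by exact_mod_cast hDNpos.ne'
    exact (mul_eq_zero.mp hl).resolve_left hDN0
  -- the annihilator submodules and the selection
  set Kj : Fin n → Submodule ℚ (Fin d → ℚ) := fun j =>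
    ⨅ (t : ↥(hli.extend (Set.subset_univ _))) (_ : t ≠ i₀),
      LinearMap.ker ((Finsupp.lapply t) ∘ₗ cq j) with hKj
  have hmemKj : ∀ (j) (q : Fin d → ℚ), q ∈ Kj j ↔ ∀ t, t ≠ i₀ → cq j q t = 0 := by
    intro j q
    rw [hKj]
    simp only [Submodule.mem_iInf, LinearMap.mem_ker, LinearMap.comp_apply,
      Finsupp.lapply_apply]
  have hbot : ⨅ j, Kj j = ⊥ := by
    rw [eq_bot_iff]
    intro q hq
    have hq' : ∀ j, ∀ t, t ≠ i₀ → cq j q t = 0 := fun j =>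
      (hmemKj j q).mp ((Submodule.mem_iInf _).mp hq j)
    set m : ℕ := ∏ l, (q l).den with hm
    have hmz : ∀ l, ∃ z : ℤ, (m:ℚ) * q l = z := by
      intro l
      apply ratden
      exact_mod_cast Int.natCast_dvd_natCast.mpr (Finset.dvd_prod_of_mem (fun l => (q l).den) (Finset.mem_univ l))
    choose ζ hζ using hmz
    have hζq : (fun l => ((ζ l : ℚ))) = (m:ℚ) • q := by
      funext l
      rw [← hζ l, Pi.smul_apply, smul_eq_mul]
    have hζ0 : ζ = 0 := by
      apply claim2
      intro j t ht
      rw [hζq, _root_.map_smul, Finsupp.smul_apply, hq' j t ht, smul_zero]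
    have hm0 : (m:ℚ) ≠ 0 := by
      have : 0 < m := Finset.prod_pos fun l _ => (q l).pos
      exact_mod_cast this.ne'
    rw [Submodule.mem_bot]
    funext l
    have h0 : ((ζ l : ℚ)) = 0 := by rw [hζ0]; simp
    have := hζ l
    rw [h0] at this
    have hql : q l = 0 := by
      rcases mul_eq_zero.mp this with hc | hc
      · exact absurd hc hm0
      · exact hc
    exact hql
  obtain ⟨σ, hσ⟩ := sel hn Kj hbot
  refine ⟨σ, ?_⟩
  intro χ hχ
  have hqmem : (fun l => ((χ l : ℚ))) ∈ ⨅ i, Kj (σ i) := by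
    rw [Submodule.mem_iInf]
    intro i
    rw [hmemKj]
    exact ((claim1 χ (σ i)).mp (hχ i)).1
  rw [hσ, Submodule.mem_bot] at hqmem
  funext l
  have h' : ((χ l : ℚ)) = 0 := by simpa using congrFun hqmem l
  exact_mod_cast h'



end Stmt3Aux

/-- A finitely generated dense subgroup `Γ` of the `d`-dimensional torus `𝕋^d` contains `d`
elements generating a dense subgroup. -/
theorem stmt3 (d : ℕ) (Γ : AddSubgroup (Fin d → AddCircle (1 : ℝ)))
    (hFG : Γ.FG) (hΓ : Dense (Γ : Set (Fin d → AddCircle (1 : ℝ)))) :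
    ∃ s : Fin d → (Fin d → AddCircle (1 : ℝ)), (∀ i, s i ∈ Γ) ∧
      Dense ((AddSubgroup.closure (Set.range s) : AddSubgroup (Fin d → AddCircle (1 : ℝ))) :
        Set (Fin d → AddCircle (1 : ℝ))) := by
  classical
  obtain ⟨S, hS⟩ := hFG
  set n := S.card with hn
  set e := S.equivFin with he
  set g : Fin n → (Fin d → AddCircle (1:ℝ)) := fun i => ((e.symm i : _) : Fin d → _) with hg
  have hgS : ∀ i, (g i) ∈ Γ := by
    intro i
    rw [← hS]
    exact AddSubgroup.subset_closure (by exact_mod_cast (e.symm i).2)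
  have hrange : ∀ y ∈ S, ∃ i, g i = y := by
    intro y hy
    refine ⟨e ⟨y, hy⟩, ?_⟩
    rw [hg]
    simp
  have P : ∀ χ : Fin d → ℤ, (∀ j, Stmt3Aux.pairHom χ (g j) = 0) → χ = 0 := by
    intro χ hχ
    apply Stmt3Aux.char_eq_zero_of_dense hΓ χ
    intro y hy
    have hle : Γ ≤ (Stmt3Aux.pairHom χ).ker := by
      rw [← hS, AddSubgroup.closure_le]
      intro z hz
      simp only [SetLike.mem_coe, AddMonoidHom.mem_ker]
      obtain ⟨i, rfl⟩ := hrange z (by exact_mod_cast hz)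
      exact hχ i
    exact AddMonoidHom.mem_ker.mp (hle hy)
  obtain ⟨σ, hσ⟩ := Stmt3Aux.bridge g P
  refine ⟨fun i => g (σ i), fun i => hgS (σ i), ?_⟩
  apply Stmt3Aux.dense_of_chars
  intro χ hχ0
  by_contra hc
  push_neg at hc
  apply hχ0
  apply hσ χ
  intro i
  exact hc _ (AddSubgroup.subset_closure ⟨i, rfl⟩)
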